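/- Contact property of the 2D HLLC flux (Lemma 4.1): if ρ_L > 0, ρ_R > 0, p > 0, n ∈ ℝ² is a unit vector, and U_L = (ρ_L, 0, p/(γ−1)), U_R = (ρ_R, 0, p/(γ−1)) (zero momentum vector), then F^hllc(U_L, U_R; n) = (0, p n, 0). -/
import Mathlib


open scoped RealInnerProductSpace

noncomputable section

/-- A 2D state `U = (ρ, m, E)` with momentum vector `m ∈ ℝ²`. -/
abbrev St2 : Type := ℝ × EuclideanSpace ℝ (Fin 2) × ℝ

/-- The admissible set `G = {(ρ, m, E) : ρ > 0, E − ‖m‖²/(2ρ) > 0}`. -/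
def admG2 : Set St2 := {U | 0 < U.1 ∧ 0 < U.2.2 - ‖U.2.1‖ ^ 2 / (2 * U.1)}

/-- The pressure `p = (γ−1)(E − ‖m‖²/(2ρ))`. -/
def press2 (γ : ℝ) (U : St2) : ℝ := (γ - 1) * (U.2.2 - ‖U.2.1‖ ^ 2 / (2 * U.1))

/-- The sound speed `√(γ p / ρ)`. -/
def sound2 (γ : ℝ) (U : St2) : ℝ := Real.sqrt (γ * press2 γ U / U.1)

/-- The normal velocity `q(U) = u·n = (m·n)/ρ`. -/
def qvel (U : St2) (n : EuclideanSpace ℝ (Fin 2)) : ℝ := ⟪U.2.1, n⟫ / U.1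

/-- The directional Euler flux `F(U)·n = (ρq, q m + p n, (E+p)q)`. -/
def eulerFn (γ : ℝ) (U : St2) (n : EuclideanSpace ℝ (Fin 2)) : St2 :=
  (U.1 * qvel U n, qvel U n • U.2.1 + press2 γ U • n,
    (U.2.2 + press2 γ U) * qvel U n)

/-- `α_n(U) = |u·n| + √(γp/ρ)`. -/
def alphaN (γ : ℝ) (U : St2) (n : EuclideanSpace ℝ (Fin 2)) : ℝ :=
  |qvel U n| + sound2 γ U

/-- Left wave speed of the 2D HLLC flux. -/
def SL2 (γ : ℝ) (UL UR : St2) (n : EuclideanSpace ℝ (Fin 2)) : ℝ :=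
  min (qvel UL n - sound2 γ UL) (qvel UR n - sound2 γ UR)

/-- Right wave speed of the 2D HLLC flux. -/
def SR2 (γ : ℝ) (UL UR : St2) (n : EuclideanSpace ℝ (Fin 2)) : ℝ :=
  max (qvel UL n + sound2 γ UL) (qvel UR n + sound2 γ UR)

/-- Middle wave speed of the 2D HLLC flux. -/
def Sstar2 (γ : ℝ) (UL UR : St2) (n : EuclideanSpace ℝ (Fin 2)) : ℝ :=
  (press2 γ UR - press2 γ UL + UL.1 * qvel UL n * (SL2 γ UL UR n - qvel UL n)
      - UR.1 * qvel UR n * (SR2 γ UL UR n - qvel UR n)) /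
    (UL.1 * (SL2 γ UL UR n - qvel UL n) - UR.1 * (SR2 γ UL UR n - qvel UR n))

/-- 2D HLLC intermediate state. -/
def Ustar2 (γ : ℝ) (Si Sst : ℝ) (Ui : St2) (n : EuclideanSpace ℝ (Fin 2)) : St2 :=
  ((Si - qvel Ui n) / (Si - Sst)) •
    ((Ui.1, Ui.2.1 + (Ui.1 * (Sst - qvel Ui n)) • n,
      Ui.2.2 + Ui.1 * (Sst - qvel Ui n) *
        (Sst + press2 γ Ui / (Ui.1 * (Si - qvel Ui n)))) : St2)

/-- 2D intermediate flux `F_{*i} = F(U_i)·n + S_i (U_{*i} − U_i)`. -/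
def Fstar2 (γ : ℝ) (Si Sst : ℝ) (Ui : St2) (n : EuclideanSpace ℝ (Fin 2)) : St2 :=
  eulerFn γ Ui n + Si • (Ustar2 γ Si Sst Ui n - Ui)

/-- The 2D HLLC numerical flux in direction `n`. -/
def Fhllc2 (γ : ℝ) (UL UR : St2) (n : EuclideanSpace ℝ (Fin 2)) : St2 :=
  if 0 ≤ SL2 γ UL UR n then eulerFn γ UL n
  else if 0 ≤ Sstar2 γ UL UR n then Fstar2 γ (SL2 γ UL UR n) (Sstar2 γ UL UR n) UL n
  else if 0 ≤ SR2 γ UL UR n then Fstar2 γ (SR2 γ UL UR n) (Sstar2 γ UL UR n) UR n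
  else eulerFn γ UR n

end

/-- Lemma 4.1: contact property of the 2D HLLC flux. -/
theorem hllc2_contact (γ : ℝ) (hγ : 1 < γ) (ρL ρR p : ℝ)
    (hρL : 0 < ρL) (hρR : 0 < ρR) (hp : 0 < p)
    (n : EuclideanSpace ℝ (Fin 2)) (hn : ‖n‖ = 1) :
    Fhllc2 γ (ρL, 0, p / (γ - 1)) (ρR, 0, p / (γ - 1)) n
      = ((0 : ℝ), p • n, (0 : ℝ)) := by
  have hγ1 : γ - 1 ≠ 0 := by linarith
  set UL : St2 := (ρL, 0, p / (γ - 1)) with hUL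
  set UR : St2 := (ρR, 0, p / (γ - 1)) with hUR
  have hqL : qvel UL n = 0 := by simp [qvel, hUL]
  have hqR : qvel UR n = 0 := by simp [qvel, hUR]
  have hpL : press2 γ UL = p := by
    simp only [press2, hUL]
    simp
    field_simp
  have hpR : press2 γ UR = p := by
    simp only [press2, hUR]
    simp
    field_simp
  have hsL : 0 < sound2 γ UL := by
    apply Real.sqrt_pos.mpr
    rw [hpL]
    have : UL.1 = ρL := rfl
    rw [this]
    positivity
  have hsR : 0 < sound2 γ UR := by
    apply Real.sqrt_pos.mpr
    rw [hpR]
    have : UR.1 = ρR := rfl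
    rw [this]
    positivity
  have hSL : SL2 γ UL UR n < 0 := by
    have := min_le_left (qvel UL n - sound2 γ UL) (qvel UR n - sound2 γ UR)
    have h2 : qvel UL n - sound2 γ UL < 0 := by rw [hqL]; linarith
    exact lt_of_le_of_lt this h2
  have hSstar : Sstar2 γ UL UR n = 0 := by
    simp [Sstar2, hqL, hqR, hpL, hpR]
  rw [Fhllc2, if_neg (not_le.mpr hSL), if_pos (le_of_eq hSstar.symm)]
  have hUstar : Ustar2 γ (SL2 γ UL UR n) (Sstar2 γ UL UR n) UL n = UL := by
    rw [hSstar, Ustar2, hqL]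
    simp only [sub_zero, mul_zero, zero_mul, zero_smul, add_zero, zero_add]
    rw [div_self (ne_of_lt hSL), one_smul]
  rw [Fstar2, hUstar]
  simp [eulerFn, hqL, hpL]
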